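/- Every element of $\mathrm{SL}_2(\mathbb{Z}/p\mathbb{Z})$ ($p$ prime) can be written as a product $\begin{pmatrix} 1 & 0 \\ y & 1 \end{pmatrix}\begin{pmatrix} 1 & x \\ 0 & 1 \end{pmatrix}\begin{pmatrix} 1 & 0 \\ y' & 1 \end{pmatrix}\begin{pmatrix} 1 & x' \\ 0 & 1 \end{pmatrix}$ for some $x, y, x', y' \in \mathbb{Z}/p\mathbb{Z}$. -/

import Mathlib

open Matrix

lemma stmt13_aux1 (p : ℕ) [Fact p.Prime] (a b c d : ZMod p) (hdet : a * d - b * c = 1)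
    (hc0 : c = 0) (ha0 : a ≠ 0) :
    !![a,b;c,d] = !![1, 0; (1:ZMod p), 1] * !![1, (a-1)/(-a); 0, 1] * !![1, 0; -a, 1]
      * !![1, (d-b-1)/(-a); 0, 1] := by
  ext i j
  fin_cases i <;> fin_cases j <;>
    simp [Matrix.mul_apply, Fin.sum_univ_succ]
  all_goals field_simp [ha0]
  · ring
  · linear_combination hdet + b * hc0
  · linear_combination hc0
  · linear_combination hdet + b * hc0

lemma stmt13_aux2 (p : ℕ) [Fact p.Prime] (a b c d : ZMod p) (hdet : a * d - b * c = 1)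
    (hc0 : ¬ c = 0) :
    !![a,b;c,d] = !![1, 0; (0:ZMod p), 1] * !![1, (a-1)/c; 0, 1] * !![1, 0; c, 1]
      * !![1, (d-1)/c; 0, 1] := by
  ext i j
  fin_cases i <;> fin_cases j <;>
    simp [Matrix.mul_apply, Fin.sum_univ_succ]
  all_goals field_simp [hc0]
  · ring
  · linear_combination -hdet
  · ring

theorem stmt13 (p : ℕ) (hp : p.Prime)
    (g : Matrix.SpecialLinearGroup (Fin 2) (ZMod p)) :
    ∃ x y x' y' : ZMod p,
      (g : Matrix (Fin 2) (Fin 2) (ZMod p))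
        = !![1, 0; y, 1] * !![1, x; 0, 1] * !![1, 0; y', 1] * !![1, x'; 0, 1] := by
  haveI : Fact p.Prime := ⟨hp⟩
  set a := (g : Matrix (Fin 2) (Fin 2) (ZMod p)) 0 0 with ha
  set b := (g : Matrix (Fin 2) (Fin 2) (ZMod p)) 0 1 with hb
  set c := (g : Matrix (Fin 2) (Fin 2) (ZMod p)) 1 0 with hc
  set d := (g : Matrix (Fin 2) (Fin 2) (ZMod p)) 1 1 with hd
  have hdet : a * d - b * c = 1 := by
    have := g.prop
    rw [Matrix.det_fin_two] at this
    exact this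
  have hM : (g : Matrix (Fin 2) (Fin 2) (ZMod p)) = !![a, b; c, d] := by
    ext i j; fin_cases i <;> fin_cases j <;> simp [ha, hb, hc, hd]
  by_cases hc0 : c = 0
  · have ha0 : a ≠ 0 := by
      intro h
      rw [h, hc0] at hdet
      simp at hdet
    exact ⟨(a - 1) / (-a), 1, (d - b - 1) / (-a), -a,
      hM.trans (stmt13_aux1 p a b c d hdet hc0 ha0)⟩
  · exact ⟨(a - 1) / c, 0, (d - 1) / c, c,
      hM.trans (stmt13_aux2 p a b c d hdet hc0)⟩
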